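/- arXiv:math-ph/0308012 — 5 statements merged into one kernel-verified Lean document; each statement's English description precedes it below -/
import Mathlib

section
/- Let n ≥ 1 and let a, b, c, d be n×n real matrices satisfying cᵀa = aᵀc and dᵀb = bᵀd, and suppose that W = dᵀa − bᵀc is invertible. Let W̃ be the 2n×2n block matrix [[a, b],[c, d]]. Then W̃ is invertible and W̃ · [[0, W⁻¹],[−(Wᵀ)⁻¹, 0]] · W̃ᵀ = −J. -/
open Matrix

/-- The standard symplectic matrix `J = [[0, -I],[I, 0]]` of size `2n × 2n`. -/
def symplJ (n : ℕ) : Matrix (Fin n ⊕ Fin n) (Fin n ⊕ Fin n) ℝ :=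
  Matrix.fromBlocks 0 (-1) 1 0

/-- if `cᵀa = aᵀc`, `dᵀb = bᵀd` and `W = dᵀa - bᵀc` is invertible, then
`W̃ = [[a, b],[c, d]]` is invertible and `W̃ [[0, W⁻¹],[-(Wᵀ)⁻¹, 0]] W̃ᵀ = -J`. -/
theorem wronskian_block_inverse_identity (n : ℕ) (hn : 1 ≤ n)
    (a b c d : Matrix (Fin n) (Fin n) ℝ)
    (hac : cᵀ * a = aᵀ * c) (hbd : dᵀ * b = bᵀ * d)
    (W : Matrix (Fin n) (Fin n) ℝ) (hW : W = dᵀ * a - bᵀ * c)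
    (hWinv : IsUnit W)
    (Wtilde : Matrix (Fin n ⊕ Fin n) (Fin n ⊕ Fin n) ℝ)
    (hWtilde : Wtilde = Matrix.fromBlocks a b c d) :
    IsUnit Wtilde ∧
      Wtilde * Matrix.fromBlocks 0 W⁻¹ (-(Wᵀ)⁻¹) 0 * Wtildeᵀ = -(symplJ n) := by
  set J : Matrix (Fin n ⊕ Fin n) (Fin n ⊕ Fin n) ℝ := symplJ n with hJ
  set M : Matrix (Fin n ⊕ Fin n) (Fin n ⊕ Fin n) ℝ :=
    Matrix.fromBlocks 0 W⁻¹ (-(Wᵀ)⁻¹) 0 with hM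
  set S : Matrix (Fin n ⊕ Fin n) (Fin n ⊕ Fin n) ℝ :=
    Matrix.fromBlocks 0 (-Wᵀ) W 0 with hS
  have hWdet : IsUnit W.det := (Matrix.isUnit_iff_isUnit_det W).mp hWinv
  have hWmul : W * W⁻¹ = 1 := Matrix.mul_nonsing_inv W hWdet
  have hWmul' : W⁻¹ * W = 1 := Matrix.nonsing_inv_mul W hWdet
  have hWtdet : IsUnit Wᵀ.det := by rwa [Matrix.det_transpose]
  have hWtmul : Wᵀ * (Wᵀ)⁻¹ = 1 := Matrix.mul_nonsing_inv _ hWtdet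
  have hWtmul' : (Wᵀ)⁻¹ * Wᵀ = 1 := Matrix.nonsing_inv_mul _ hWtdet
  -- key identity
  have hkey : Wtildeᵀ * J * Wtilde = S := by
    rw [hWtilde, hJ, hS, symplJ, Matrix.fromBlocks_transpose,
      Matrix.fromBlocks_multiply, Matrix.fromBlocks_multiply]
    simp only [Matrix.mul_zero, Matrix.zero_mul, Matrix.mul_one, Matrix.one_mul,
      Matrix.mul_neg, Matrix.neg_mul, add_zero, zero_add, mul_zero, mul_one, mul_neg,
      neg_mul, one_mul, zero_mul]
    have hWT : Wᵀ = aᵀ * d - cᵀ * b := by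
      rw [hW]
      simp [Matrix.transpose_sub, Matrix.transpose_mul]
    rw [hac, hbd, hWT, hW]
    congr 1 <;> abel
  have hSM : S * M = 1 := by
    rw [hS, hM, Matrix.fromBlocks_multiply]
    simp [hWmul, hWtmul, ← Matrix.fromBlocks_one]
  have hMS : M * S = 1 := by
    rw [hS, hM, Matrix.fromBlocks_multiply]
    simp [hWmul', hWtmul', ← Matrix.fromBlocks_one]
  have hJJ : (-J) * J = 1 := by
    rw [hJ, symplJ]
    simp only [Matrix.fromBlocks_neg, Matrix.fromBlocks_multiply]
    simp [← Matrix.fromBlocks_one]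
  have hJJ' : J * (-J) = 1 := by
    rw [hJ, symplJ]
    simp only [Matrix.fromBlocks_neg, Matrix.fromBlocks_multiply]
    simp [← Matrix.fromBlocks_one]
  have hJunit : IsUnit J := by
    rw [Matrix.isUnit_iff_isUnit_det]
    have := congrArg Matrix.det hJJ'
    rw [Matrix.det_mul, Matrix.det_one] at this
    exact IsUnit.of_mul_eq_one _ this
  have hSunit : IsUnit S := by
    rw [Matrix.isUnit_iff_isUnit_det]
    have := congrArg Matrix.det hSM
    rw [Matrix.det_mul, Matrix.det_one] at this
    exact IsUnit.of_mul_eq_one _ this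
  -- Wtilde is a unit
  have hWtu : IsUnit Wtilde := by
    rw [Matrix.isUnit_iff_isUnit_det]
    have := congrArg Matrix.det hkey
    rw [Matrix.det_mul, Matrix.det_mul, Matrix.det_transpose] at this
    have hSd : IsUnit S.det := (Matrix.isUnit_iff_isUnit_det S).mp hSunit
    rw [← this] at hSd
    exact isUnit_of_mul_isUnit_right (by rwa [mul_assoc] at hSd)
  refine ⟨hWtu, ?_⟩
  have hJWu : IsUnit (J * Wtilde) := hJunit.mul hWtu
  apply hJWu.mul_right_cancel
  calc Wtilde * M * Wtildeᵀ * (J * Wtilde)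
      = Wtilde * (M * (Wtildeᵀ * J * Wtilde)) := by simp only [mul_assoc]
    _ = Wtilde := by rw [hkey, hMS, mul_one]
    _ = -J * (J * Wtilde) := by rw [← mul_assoc, hJJ, one_mul]
end

section
/- Let n ≥ 1 and let v : ℝ → Mₙ(ℝ) be measurable with v(x) symmetric for every x, satisfying the Birman condition: there is c₀ < ∞ with ∫_x^{x+1} ‖v(z)‖ dz ≤ c₀ for all x ≥ 0. Then with Λ₀ = −(1 + c₀)², for every continuously differentiable compactly supported function φ : [0,∞) → ℝⁿ one has ∫₀^∞ ( |φ′(x)|² + (v(x)φ(x), φ(x)) ) dx ≥ Λ₀ ∫₀^∞ |φ(x)|² dx; i.e. the quadratic form of the Schrödinger operator H = −d²/dx² + v is bounded below. -/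
open Matrix MeasureTheory
open scoped Matrix.Norms.L2Operator

section Aux

variable {n : ℕ} {φ : ℝ → EuclideanSpace ℝ (Fin n)}

lemma aux_hasDerivAt (hφ : ContDiff ℝ 1 φ) (t : ℝ) :
    HasDerivAt (fun s => ‖φ s‖ ^ 2) (2 * (inner ℝ (φ t) (deriv φ t) : ℝ)) t :=
  ((hφ.differentiable one_ne_zero) t).hasDerivAt.norm_sq

lemma aux_deriv_abs_le (hφ : ContDiff ℝ 1 φ) (t : ℝ) :
    |2 * (inner ℝ (φ t) (deriv φ t) : ℝ)| ≤ 2 * (‖deriv φ t‖ * ‖φ t‖) := by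
  rw [abs_mul, abs_two]
  have := abs_real_inner_le_norm (φ t) (deriv φ t)
  nlinarith [this, abs_nonneg (inner ℝ (φ t) (deriv φ t) : ℝ)]

/-- The key pointwise-on-interval estimate:
`‖φ x‖² ≤ ∫_a^{a+1} ‖φ‖² + 2 ∫_a^{a+1} ‖φ'‖ ‖φ‖` for `x ∈ [a, a+1]`. -/
lemma aux_sup_bound (hφ : ContDiff ℝ 1 φ) (a : ℝ) {x : ℝ} (hx : x ∈ Set.Icc a (a + 1)) :
    ‖φ x‖ ^ 2 ≤ (∫ y in a..(a + 1), ‖φ y‖ ^ 2)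
      + 2 * ∫ y in a..(a + 1), ‖deriv φ y‖ * ‖φ y‖ := by
  have hcont_h : Continuous fun s => ‖φ s‖ ^ 2 := (hφ.continuous.norm).pow 2
  have hcont_h' : Continuous fun t => 2 * (inner ℝ (φ t) (deriv φ t) : ℝ) :=
    continuous_const.mul (hφ.continuous.inner (contDiff_one_iff_deriv.mp hφ).2)
  have habs : Continuous fun t => |2 * (inner ℝ (φ t) (deriv φ t) : ℝ)| := hcont_h'.abs
  have hftc : ∀ c d : ℝ,
      (∫ t in c..d, 2 * (inner ℝ (φ t) (deriv φ t) : ℝ)) = ‖φ d‖ ^ 2 - ‖φ c‖ ^ 2 := fun c d =>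
    intervalIntegral.integral_eq_sub_of_hasDerivAt (fun t _ => aux_hasDerivAt hφ t)
      (hcont_h'.intervalIntegrable c d)
  have key : ∀ y ∈ Set.Icc a (a + 1),
      ‖φ x‖ ^ 2 - (∫ t in a..(a + 1), |2 * (inner ℝ (φ t) (deriv φ t) : ℝ)|) ≤ ‖φ y‖ ^ 2 := by
    intro y hy
    have h2 : ‖φ x‖ ^ 2 - ‖φ y‖ ^ 2
        ≤ ∫ t in a..(a + 1), |2 * (inner ℝ (φ t) (deriv φ t) : ℝ)| := by
      rw [← hftc y x]
      rcases le_total y x with hyx | hyx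
      · calc (∫ t in y..x, 2 * (inner ℝ (φ t) (deriv φ t) : ℝ))
            ≤ ∫ t in y..x, |2 * (inner ℝ (φ t) (deriv φ t) : ℝ)| :=
              intervalIntegral.integral_mono hyx (hcont_h'.intervalIntegrable _ _)
                (habs.intervalIntegrable _ _) (fun t => le_abs_self _)
          _ ≤ ∫ t in a..(a + 1), |2 * (inner ℝ (φ t) (deriv φ t) : ℝ)| :=
              intervalIntegral.integral_mono_interval hy.1 hyx hx.2
                (Filter.Eventually.of_forall fun t => abs_nonneg _)
                (habs.intervalIntegrable _ _)
      · rw [intervalIntegral.integral_symm, ← intervalIntegral.integral_neg]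
        calc (∫ t in x..y, -(2 * (inner ℝ (φ t) (deriv φ t) : ℝ)))
            ≤ ∫ t in x..y, |2 * (inner ℝ (φ t) (deriv φ t) : ℝ)| :=
              intervalIntegral.integral_mono hyx (hcont_h'.neg.intervalIntegrable _ _)
                (habs.intervalIntegrable _ _) (fun t => neg_le_abs _)
          _ ≤ ∫ t in a..(a + 1), |2 * (inner ℝ (φ t) (deriv φ t) : ℝ)| :=
              intervalIntegral.integral_mono_interval hx.1 hyx hy.2
                (Filter.Eventually.of_forall fun t => abs_nonneg _)
                (habs.intervalIntegrable _ _)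
    linarith
  have hmono := intervalIntegral.integral_mono_on (by linarith : a ≤ a + 1)
    (intervalIntegrable_const (μ := volume)) (hcont_h.intervalIntegrable a (a + 1)) key
  rw [intervalIntegral.integral_const] at hmono
  have hsimp : ((a + 1 - a) : ℝ) = 1 := by ring
  rw [hsimp, one_smul] at hmono
  have habs_le : (∫ t in a..(a + 1), |2 * (inner ℝ (φ t) (deriv φ t) : ℝ)|)
      ≤ 2 * ∫ y in a..(a + 1), ‖deriv φ y‖ * ‖φ y‖ := by
    rw [← intervalIntegral.integral_const_mul]
    exact intervalIntegral.integral_mono (by linarith) (habs.intervalIntegrable _ _)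
      ((continuous_const.mul ((contDiff_one_iff_deriv.mp hφ).2.norm.mul
        hφ.continuous.norm)).intervalIntegrable _ _)
      (fun t => aux_deriv_abs_le hφ t)
  linarith

lemma aux_dot_bound {n : ℕ} (A : Matrix (Fin n) (Fin n) ℝ) (u : EuclideanSpace ℝ (Fin n)) :
    |A.mulVec u ⬝ᵥ u| ≤ ‖A‖ * ‖u‖ ^ 2 := by
  have h1 : A.mulVec u ⬝ᵥ u
      = (inner ℝ ((EuclideanSpace.equiv (Fin n) ℝ).symm (A.mulVec u)) u : ℝ) := by
    rw [EuclideanSpace.inner_eq_star_dotProduct]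
    simp [dotProduct, mul_comm]
  rw [h1]
  calc |(inner ℝ ((EuclideanSpace.equiv (Fin n) ℝ).symm (A.mulVec u)) u : ℝ)|
      ≤ ‖(EuclideanSpace.equiv (Fin n) ℝ).symm (A.mulVec u)‖ * ‖u‖ := abs_real_inner_le_norm _ _
    _ ≤ (‖A‖ * ‖u‖) * ‖u‖ := by
        have := A.l2_opNorm_mulVec u
        have hu : (0:ℝ) ≤ ‖u‖ := norm_nonneg _
        nlinarith [norm_nonneg ((EuclideanSpace.equiv (Fin n) ℝ).symm (A.mulVec u))]
    _ = ‖A‖ * ‖u‖ ^ 2 := by ring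

end Aux

/-- under the Birman condition `∫_x^{x+1} ‖v‖ ≤ c₀` for all `x ≥ 0`, the
quadratic form of `H = -d²/dx² + v` on `[0, ∞)` is bounded below by `Λ₀ = -(1 + c₀)²`. -/
theorem quadratic_form_bounded_below_of_birman (n : ℕ) (hn : 1 ≤ n)
    (v : ℝ → Matrix (Fin n) (Fin n) ℝ)
    (hv_meas : ∀ i j, Measurable fun x => v x i j)
    (hv_symm : ∀ x, (v x)ᵀ = v x)
    (c₀ : ℝ)
    (hv_int : ∀ x : ℝ, 0 ≤ x → IntervalIntegrable (fun z => ‖v z‖) volume x (x + 1))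
    (h_birman : ∀ x : ℝ, 0 ≤ x → ∫ z in x..(x + 1), ‖v z‖ ≤ c₀)
    (Λ₀ : ℝ) (hΛ₀ : Λ₀ = -(1 + c₀) ^ 2)
    (φ : ℝ → EuclideanSpace ℝ (Fin n))
    (hφ : ContDiff ℝ 1 φ)
    (hφ_supp : HasCompactSupport φ)
    (hφ_pos : ∀ x < (0 : ℝ), φ x = 0) :
    (∫ x in Set.Ioi (0 : ℝ), (‖deriv φ x‖ ^ 2 + (v x).mulVec (φ x) ⬝ᵥ (φ x)))
      ≥ Λ₀ * ∫ x in Set.Ioi (0 : ℝ), ‖φ x‖ ^ 2 := by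
  have hφc : Continuous φ := hφ.continuous
  have hφd : Differentiable ℝ φ := hφ.differentiable one_ne_zero
  have hφ'c : Continuous (deriv φ) := (contDiff_one_iff_deriv.mp hφ).2
  -- c₀ is nonnegative
  have hc₀ : 0 ≤ c₀ := le_trans (intervalIntegral.integral_nonneg (by norm_num)
      (fun z _ => norm_nonneg _)) (h_birman 0 le_rfl)
  -- choose N beyond the support
  obtain ⟨R, hR⟩ := hφ_supp.isCompact.isBounded.subset_closedBall 0
  set N : ℕ := ⌈R⌉₊ + 1 with hNdef
  have hNR : R < (N : ℝ) := by
    have := Nat.le_ceil R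
    push_cast [hNdef]
    linarith
  have hzero : ∀ x : ℝ, (N : ℝ) ≤ x → φ x = 0 := by
    intro x hx
    apply image_eq_zero_of_notMem_tsupport
    intro hmem
    have := hR hmem
    simp only [Metric.mem_closedBall, Real.dist_eq, sub_zero] at this
    have : |x| ≤ R := this
    rw [abs_of_nonneg (le_trans (Nat.cast_nonneg N) hx)] at this
    linarith
  have hzero' : ∀ x : ℝ, (N : ℝ) ≤ x → deriv φ x = 0 := by
    intro x hx
    by_contra h
    have hmem : x ∈ tsupport φ := support_deriv_subset (by simp [Function.mem_support, h])
    have := hR hmem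
    simp only [Metric.mem_closedBall, Real.dist_eq, sub_zero] at this
    rw [abs_of_nonneg (le_trans (Nat.cast_nonneg N) hx)] at this
    linarith
    -- abbreviations
  set W : ℝ → ℝ := fun x => (v x).mulVec (φ x) ⬝ᵥ (φ x) with hW
  set h : ℝ → ℝ := fun x => ‖φ x‖ ^ 2 with hh
  set g : ℝ → ℝ := fun x => ‖deriv φ x‖ * ‖φ x‖ with hg
  have hcont_h : Continuous h := (hφc.norm).pow 2
  have hcont_g : Continuous g := hφ'c.norm.mul hφc.norm
  have hcont_f1 : Continuous fun x => ‖deriv φ x‖ ^ 2 := (hφ'c.norm).pow 2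
  -- measurability of W
  have hφi_meas : ∀ i : Fin n, Measurable fun x => φ x i := fun i =>
    ((EuclideanSpace.proj i).continuous.comp hφc).measurable
  have hW_meas : Measurable W := by
    have : W = fun x => ∑ i, (∑ j, v x i j * φ x j) * φ x i := by
      funext x; simp [hW, Matrix.mulVec, dotProduct]
    rw [this]
    exact Finset.measurable_sum _ fun i _ =>
      (Finset.measurable_sum _ fun j _ => (hv_meas i j).mul (hφi_meas j)).mul (hφi_meas i)
  -- pointwise bound |W x| ≤ ‖v x‖ * h x
  have hW_bound : ∀ x, |W x| ≤ ‖v x‖ * h x := fun x => aux_dot_bound (v x) (φ x)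
  -- integrability of ‖v‖ on [0, k]
  have hIvk : ∀ k : ℕ, IntervalIntegrable (fun z => ‖v z‖) volume 0 k := by
    intro k
    induction k with
    | zero => simp
    | succ k ih =>
      have h2 := hv_int k (Nat.cast_nonneg k)
      push_cast
      exact ih.trans h2
  -- integrability of ‖v‖ * h and W on intervals
  have hIvh : ∀ a b : ℝ, IntervalIntegrable (fun z => ‖v z‖) volume a b →
      IntervalIntegrable (fun z => ‖v z‖ * h z) volume a b := fun a b hi =>
    hi.mul_continuousOn hcont_h.continuousOn
  have hIW : ∀ a b : ℝ, IntervalIntegrable (fun z => ‖v z‖) volume a b →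
      IntervalIntegrable W volume a b := by
    intro a b hi
    refine (hIvh a b hi).mono_fun hW_meas.aestronglyMeasurable.restrict ?_
    refine Filter.Eventually.of_forall fun x => ?_
    have h0 : (0:ℝ) ≤ h x := sq_nonneg ‖φ x‖
    simp only [Real.norm_eq_abs]
    rw [abs_of_nonneg (mul_nonneg (norm_nonneg _) h0)]
    exact hW_bound x
  -- per-interval lower bound for ∫ W
  have hSk : ∀ k : ℕ,
      -(c₀ * ((∫ y in (k:ℝ)..(k+1), h y) + 2 * ∫ y in (k:ℝ)..(k+1), g y))
        ≤ ∫ x in (k:ℝ)..(k+1), W x := by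
    intro k
    have hk0 : (0:ℝ) ≤ (k:ℝ) := Nat.cast_nonneg k
    have hiv := hv_int k hk0
    set S : ℝ := (∫ y in (k:ℝ)..(k+1), h y) + 2 * ∫ y in (k:ℝ)..(k+1), g y with hS
    have hhS : ∀ x ∈ Set.Icc (k:ℝ) (k+1), h x ≤ S := fun x hx => aux_sup_bound hφ _ hx
    have hS0 : 0 ≤ S := by
      have h1 : 0 ≤ ∫ y in (k:ℝ)..(k+1), h y :=
        intervalIntegral.integral_nonneg (by linarith) (fun y _ => sq_nonneg _)
      have h2 : 0 ≤ ∫ y in (k:ℝ)..(k+1), g y :=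
        intervalIntegral.integral_nonneg (by linarith)
          (fun y _ => mul_nonneg (norm_nonneg _) (norm_nonneg _))
      linarith
    have step1 : -(∫ x in (k:ℝ)..(k+1), ‖v x‖ * h x) ≤ ∫ x in (k:ℝ)..(k+1), W x := by
      rw [← intervalIntegral.integral_neg]
      refine intervalIntegral.integral_mono (by linarith) ((hIvh _ _ hiv).neg) (hIW _ _ hiv) ?_
      intro x
      have := hW_bound x
      have := neg_abs_le (W x)
      simp only [Pi.neg_apply]
      linarith
    have step2 : (∫ x in (k:ℝ)..(k+1), ‖v x‖ * h x) ≤ c₀ * S := by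
      calc (∫ x in (k:ℝ)..(k+1), ‖v x‖ * h x)
          ≤ ∫ x in (k:ℝ)..(k+1), ‖v x‖ * S := by
            refine intervalIntegral.integral_mono_on (by linarith) (hIvh _ _ hiv)
              (hiv.mul_const S) ?_
            exact fun x hx => mul_le_mul_of_nonneg_left (hhS x hx) (norm_nonneg _)
        _ = (∫ x in (k:ℝ)..(k+1), ‖v x‖) * S := intervalIntegral.integral_mul_const _ _
        _ ≤ c₀ * S := mul_le_mul_of_nonneg_right (h_birman k hk0) hS0
    linarith
  -- sum the intervals
  have hadj : ∀ (f : ℝ → ℝ), (∀ k : ℕ, k < N → IntervalIntegrable f volume k (k+1)) →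
      (∑ k ∈ Finset.range N, ∫ x in (k:ℝ)..((k:ℝ)+1), f x) = ∫ x in (0:ℝ)..(N:ℝ), f x := by
    intro f hf
    have := intervalIntegral.sum_integral_adjacent_intervals (a := fun k : ℕ => (k:ℝ))
      (μ := volume) (n := N) (f := f) ?_
    · simpa using this
    · intro k hk
      simpa using hf k hk
  have hsum_h := hadj h (fun k _ => hcont_h.intervalIntegrable _ _)
  have hsum_g := hadj g (fun k _ => hcont_g.intervalIntegrable _ _)
  have hsum_W := hadj W (fun k _ => hIW _ _ (hv_int k (Nat.cast_nonneg k)))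
  have hWlow : -(c₀ * ((∫ y in (0:ℝ)..(N:ℝ), h y) + 2 * ∫ y in (0:ℝ)..(N:ℝ), g y))
      ≤ ∫ x in (0:ℝ)..(N:ℝ), W x := by
    rw [← hsum_h, ← hsum_g, ← hsum_W]
    calc -(c₀ * ((∑ k ∈ Finset.range N, ∫ x in (k:ℝ)..((k:ℝ)+1), h x)
            + 2 * ∑ k ∈ Finset.range N, ∫ x in (k:ℝ)..((k:ℝ)+1), g x))
        = ∑ k ∈ Finset.range N, -(c₀ * ((∫ y in (k:ℝ)..((k:ℝ)+1), h y)
            + 2 * ∫ y in (k:ℝ)..((k:ℝ)+1), g y)) := by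
          rw [Finset.sum_neg_distrib, ← Finset.mul_sum, Finset.sum_add_distrib,
            ← Finset.mul_sum]
      _ ≤ ∑ k ∈ Finset.range N, ∫ x in (k:ℝ)..((k:ℝ)+1), W x :=
          Finset.sum_le_sum fun k _ => hSk k
    -- pointwise Cauchy-Schwarz-type bound
  have hpt : ∀ x, 2 * c₀ * g x - c₀ ^ 2 * h x ≤ ‖deriv φ x‖ ^ 2 := by
    intro x
    have hsq := sq_nonneg (‖deriv φ x‖ - c₀ * ‖φ x‖)
    simp only [hg, hh]
    nlinarith
  have hint1 : (∫ x in (0:ℝ)..(N:ℝ), (2 * c₀ * g x - c₀ ^ 2 * h x))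
      ≤ ∫ x in (0:ℝ)..(N:ℝ), ‖deriv φ x‖ ^ 2 :=
    intervalIntegral.integral_mono (Nat.cast_nonneg N)
      (((continuous_const.mul hcont_g).sub (continuous_const.mul hcont_h)).intervalIntegrable _ _)
      (hcont_f1.intervalIntegrable _ _) hpt
  have hsplit : (∫ x in (0:ℝ)..(N:ℝ), (2 * c₀ * g x - c₀ ^ 2 * h x))
      = 2 * c₀ * (∫ x in (0:ℝ)..(N:ℝ), g x) - c₀ ^ 2 * ∫ x in (0:ℝ)..(N:ℝ), h x := by
    rw [intervalIntegral.integral_sub (f := fun x => 2 * c₀ * g x) (g := fun x => c₀ ^ 2 * h x)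
      ((continuous_const.mul hcont_g : Continuous fun x => 2 * c₀ * g x).intervalIntegrable _ _)
      ((continuous_const.mul hcont_h : Continuous fun x => c₀ ^ 2 * h x).intervalIntegrable _ _),
      intervalIntegral.integral_const_mul, intervalIntegral.integral_const_mul]
  have hH0 : 0 ≤ ∫ x in (0:ℝ)..(N:ℝ), h x :=
    intervalIntegral.integral_nonneg (Nat.cast_nonneg N) (fun x _ => sq_nonneg _)
  -- convert set integrals on Ioi 0 to interval integrals on [0, N]
  have hconv : ∀ f : ℝ → ℝ, (∀ x : ℝ, (N:ℝ) ≤ x → f x = 0) →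
      ∫ x in Set.Ioi (0:ℝ), f x = ∫ x in (0:ℝ)..(N:ℝ), f x := by
    intro f hf
    rw [intervalIntegral.integral_of_le (Nat.cast_nonneg N)]
    refine setIntegral_eq_of_subset_of_ae_diff_eq_zero measurableSet_Ioi.nullMeasurableSet
      Set.Ioc_subset_Ioi_self ?_
    refine Filter.Eventually.of_forall fun x hx => hf x ?_
    rcases hx with ⟨hx1, hx2⟩
    simp only [Set.mem_Ioc, not_and, not_le] at hx2
    exact (hx2 hx1).le
  have hWzero : ∀ x : ℝ, (N:ℝ) ≤ x → ‖deriv φ x‖ ^ 2 + W x = 0 := by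
    intro x hx
    simp [hW, hzero x hx, hzero' x hx]
  have hhzero : ∀ x : ℝ, (N:ℝ) ≤ x → h x = 0 := by
    intro x hx
    simp [hh, hzero x hx]
  have hgoal1 : (∫ x in Set.Ioi (0:ℝ), (‖deriv φ x‖ ^ 2 + (v x).mulVec (φ x) ⬝ᵥ (φ x)))
      = (∫ x in (0:ℝ)..(N:ℝ), ‖deriv φ x‖ ^ 2) + ∫ x in (0:ℝ)..(N:ℝ), W x := by
    rw [hconv _ hWzero, intervalIntegral.integral_add (hcont_f1.intervalIntegrable _ _)
      (hIW _ _ (hIvk N))]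
  have hgoal2 : (∫ x in Set.Ioi (0:ℝ), ‖φ x‖ ^ 2) = ∫ x in (0:ℝ)..(N:ℝ), h x :=
    hconv h hhzero
  rw [ge_iff_le, hgoal1, hgoal2, hΛ₀]
  nlinarith [hWlow, hint1, hsplit, hH0, hc₀]
end

section
/- Let n ≥ 1, let v : ℝ → Mₙ(ℝ) be continuous with v(x) symmetric for every x and v(x) = 0 for x ∉ [0, s] (s > 0), let k > 0 and λ = k². Suppose w : ℝ → Mₙ(ℂ) is a twice differentiable solution of −w″(x) + v(x)w(x) = λ w(x) such that w(x) = e^{−ikx}·I for x < 0, and there exist matrices P, S ∈ Mₙ(ℂ) with w(x) = e^{ikx}·P + e^{−ikx}·S for x > s. Then the 'conservation of energy' identity holds: S*S − P*P = I, where * denotes the conjugate transpose. -/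
open Matrix

lemma star_exp_IkT (k t : ℝ) :
    star (Complex.exp (Complex.I * k * t)) = Complex.exp (-(Complex.I * k * t)) := by
  rw [Complex.star_def, ← Complex.exp_conj]
  congr 1
  simp [Complex.ext_iff]

lemma star_exp_IkT' (k t : ℝ) :
    star (Complex.exp (-(Complex.I * k * t))) = Complex.exp (Complex.I * k * t) := by
  rw [← star_exp_IkT k t, star_star]

lemma hexp_deriv (c : ℂ) (x : ℝ) :
    HasDerivAt (fun t : ℝ => Complex.exp (c * t)) (c * Complex.exp (c * x)) x := by
  have h1 : HasDerivAt (fun t : ℝ => c * (t:ℂ)) c x := by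
    simpa using (Complex.ofRealCLM.hasDerivAt (x := x)).const_mul c
  simpa [mul_comm] using h1.cexp

set_option maxHeartbeats 1000000 in
/-- "conservation of energy" for the scattering solution: if
`-w'' + v w = k² w` with `w(x) = e^{-ikx} I` for `x < 0` and
`w(x) = e^{ikx} P + e^{-ikx} S` for `x > s`, then `S*S - P*P = I`. -/
theorem conservation_of_energy (n : ℕ) (hn : 1 ≤ n)
    (s : ℝ) (hs : 0 < s)
    (v : ℝ → Matrix (Fin n) (Fin n) ℝ)
    (hv_cont : ∀ i j, Continuous fun x => v x i j)
    (hv_symm : ∀ x, (v x)ᵀ = v x)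
    (hv_supp : ∀ x, x ∉ Set.Icc 0 s → v x = 0)
    (k : ℝ) (hk : 0 < k) (lam : ℂ) (hlam : lam = (k : ℂ) ^ 2)
    (w w' w'' : ℝ → Matrix (Fin n) (Fin n) ℂ)
    (hw' : ∀ x i j, HasDerivAt (fun t => w t i j) (w' x i j) x)
    (hw'' : ∀ x i j, HasDerivAt (fun t => w' t i j) (w'' x i j) x)
    (hw_eq : ∀ x, -w'' x + ((v x).map (Complex.ofReal)) * w x = lam • w x)
    (hw_neg : ∀ x < (0 : ℝ),
      w x = Complex.exp (-(Complex.I * k * x)) • (1 : Matrix (Fin n) (Fin n) ℂ))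
    (P S : Matrix (Fin n) (Fin n) ℂ)
    (hw_pos : ∀ x : ℝ, s < x →
      w x = Complex.exp (Complex.I * k * x) • P + Complex.exp (-(Complex.I * k * x)) • S) :
    Sᴴ * S - Pᴴ * P = 1 := by
  have hlam_star : star lam = lam := by
    rw [hlam]; simp [← Complex.ofReal_pow, Complex.star_def, Complex.conj_ofReal]
  -- entrywise form of the ODE
  have hW2 : ∀ x l j, w'' x l j = (∑ m, ((v x l m : ℂ)) * w x m j) - lam * w x l j := by
    intro x l j
    have h := congrFun (congrFun (hw_eq x) l) j
    simp only [Matrix.add_apply, Matrix.neg_apply, Matrix.mul_apply, Matrix.smul_apply,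
      Matrix.map_apply, smul_eq_mul] at h
    linear_combination -h
  have hW2s : ∀ x l i, star (w'' x l i)
      = (∑ m, ((v x l m : ℂ)) * star (w x m i)) - lam * star (w x l i) := by
    intro x l i
    rw [hW2 x l i, star_sub, star_mul', hlam_star, star_sum]
    congr 1
    refine Finset.sum_congr rfl fun m _ => ?_
    rw [star_mul', Complex.star_def, Complex.conj_ofReal]
  -- the Wronskian is constant
  have key : ∀ (i j : Fin n) (x y : ℝ),
      (∑ l, (star (w x l i) * w' x l j - star (w' x l i) * w x l j))
      = (∑ l, (star (w y l i) * w' y l j - star (w' y l i) * w y l j)) := by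
    intro i j x y
    have hd : ∀ t : ℝ, HasDerivAt
        (fun u => ∑ l, (star (w u l i) * w' u l j - star (w' u l i) * w u l j)) 0 t := by
      intro t
      have h : HasDerivAt
          (fun u => ∑ l, (star (w u l i) * w' u l j - star (w' u l i) * w u l j))
          (∑ l, (star (w t l i) * w'' t l j - star (w'' t l i) * w t l j)) t := by
        apply HasDerivAt.fun_sum
        intro l _
        have t1 := ((hw' t l i).star).fun_mul (hw'' t l j)
        have t2 := ((hw'' t l i).star).fun_mul (hw' t l j)
        convert t1.fun_sub t2 using 1
        ring
      have hz : (∑ l, (star (w t l i) * w'' t l j - star (w'' t l i) * w t l j)) = 0 := by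
        have hterm : ∀ l, star (w t l i) * w'' t l j - star (w'' t l i) * w t l j
            = (∑ m, ((v t l m : ℂ)) * (star (w t l i) * w t m j))
              - ∑ m, ((v t l m : ℂ)) * (star (w t m i) * w t l j) := by
          intro l
          rw [hW2 t l j, hW2s t l i]
          have h1 : star (w t l i) * ((∑ m, ((v t l m : ℂ)) * w t m j) - lam * w t l j)
              - ((∑ m, ((v t l m : ℂ)) * star (w t m i)) - lam * star (w t l i)) * w t l j
              = star (w t l i) * (∑ m, ((v t l m : ℂ)) * w t m j)
                - (∑ m, ((v t l m : ℂ)) * star (w t m i)) * w t l j := by ring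
          rw [h1, Finset.mul_sum, Finset.sum_mul]
          congr 1 <;> exact Finset.sum_congr rfl (fun m _ => by ring)
        rw [Finset.sum_congr rfl (fun l _ => hterm l), Finset.sum_sub_distrib, sub_eq_zero,
          Finset.sum_comm]
        refine Finset.sum_congr rfl fun l _ => Finset.sum_congr rfl fun m _ => ?_
        have hsym : v t m l = v t l m := by
          have := congrFun (congrFun (hv_symm t) l) m
          simpa [Matrix.transpose_apply] using this
        rw [hsym]
      rw [hz] at h
      exact h
    exact is_const_of_deriv_eq_zero (fun t => (hd t).differentiableAt)
      (fun t => (hd t).deriv) x y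
  -- values at x = -1
  set K : ℂ := Complex.I * k with hK
  have hwneg1 : ∀ l i, w (-1) l i
      = Complex.exp (-(K * ((-1:ℝ):ℂ))) * (1 : Matrix (Fin n) (Fin n) ℂ) l i := by
    intro l i
    rw [hw_neg (-1) (by norm_num), Matrix.smul_apply, smul_eq_mul]
  have hw'neg1 : ∀ i j, w' (-1) i j
      = (-K) * Complex.exp ((-K) * ((-1:ℝ):ℂ)) * (1 : Matrix (Fin n) (Fin n) ℂ) i j := by
    intro i j
    have hE : HasDerivAt (fun t : ℝ => Complex.exp ((-K) * t) * (1 : Matrix (Fin n) (Fin n) ℂ) i j)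
        ((-K) * Complex.exp ((-K) * ((-1:ℝ):ℂ)) * (1 : Matrix (Fin n) (Fin n) ℂ) i j) (-1) := by
      simpa [mul_assoc] using (hexp_deriv (-K) (-1)).mul_const ((1 : Matrix (Fin n) (Fin n) ℂ) i j)
    have heq : (fun t => w t i j)
        =ᶠ[nhds (-1:ℝ)] (fun t : ℝ => Complex.exp ((-K) * t) * (1 : Matrix (Fin n) (Fin n) ℂ) i j) := by
      filter_upwards [Iio_mem_nhds (show (-1:ℝ) < (0:ℝ) by norm_num)] with t ht
      rw [hw_neg t ht, Matrix.smul_apply, smul_eq_mul]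
      congr 2
      push_cast; ring
    exact (hw' (-1) i j).unique (hE.congr_of_eventuallyEq heq)
  -- values at x = s + 1
  set b : ℝ := s + 1 with hb
  have hsb : s < b := by simp [hb]
  have hwb : ∀ l i, w b l i = Complex.exp (K * (b:ℂ)) * P l i + Complex.exp (-(K * (b:ℂ))) * S l i := by
    intro l i
    rw [hw_pos b hsb, Matrix.add_apply, Matrix.smul_apply, Matrix.smul_apply, smul_eq_mul, smul_eq_mul]
  have hw'b : ∀ i j, w' b i j
      = K * Complex.exp (K * (b:ℂ)) * P i j + (-K) * Complex.exp ((-K) * (b:ℂ)) * S i j := by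
    intro i j
    have hE : HasDerivAt
        (fun t : ℝ => Complex.exp (K * t) * P i j + Complex.exp ((-K) * t) * S i j)
        (K * Complex.exp (K * (b:ℂ)) * P i j + (-K) * Complex.exp ((-K) * (b:ℂ)) * S i j) b :=
      ((hexp_deriv K b).mul_const (P i j)).add ((hexp_deriv (-K) b).mul_const (S i j))
    have heq : (fun t => w t i j)
        =ᶠ[nhds b] (fun t : ℝ => Complex.exp (K * t) * P i j + Complex.exp ((-K) * t) * S i j) := by
      filter_upwards [Ioi_mem_nhds hsb] with t ht
      rw [hw_pos t ht, Matrix.add_apply, Matrix.smul_apply, Matrix.smul_apply, smul_eq_mul, smul_eq_mul]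
      congr 3 <;> · push_cast; ring
    exact (hw' b i j).unique (hE.congr_of_eventuallyEq heq)
  -- abbreviations and algebraic facts
  set p : ℂ := Complex.exp (K * (b:ℂ)) with hp
  set q : ℂ := Complex.exp (-(K * (b:ℂ))) with hq
  have hqK : Complex.exp ((-K) * (b:ℂ)) = q := by rw [hq]; congr 1; ring
  have hpq : p * q = 1 := by
    rw [hp, hq, ← Complex.exp_add, add_neg_cancel, Complex.exp_zero]
  have hsp : star p = q := by
    rw [hp, hq, hK]
    exact star_exp_IkT k b
  have hsq : star q = p := by
    rw [hp, hq, hK]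
    exact star_exp_IkT' k b
  have hKs : star K = -K := by
    rw [hK]
    simp [Complex.star_def, Complex.conj_ofReal]
  set c : ℂ := Complex.exp (-(K * ((-1:ℝ):ℂ))) with hc
  have hcK : Complex.exp ((-K) * ((-1:ℝ):ℂ)) = c := by rw [hc]; congr 1; ring
  have hcc : star c * c = 1 := by
    rw [hc, hK]
    rw [star_exp_IkT' k (-1)]
    rw [← Complex.exp_add]
    simp
  have hone : ∀ (l i : Fin n), star ((1 : Matrix (Fin n) (Fin n) ℂ) l i)
      = (1 : Matrix (Fin n) (Fin n) ℂ) l i := by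
    intro l i
    simp [Matrix.one_apply, apply_ite]
  have hsum1 : ∀ i j : Fin n, (∑ l, (1 : Matrix (Fin n) (Fin n) ℂ) l i * (1 : Matrix (Fin n) (Fin n) ℂ) l j)
      = (1 : Matrix (Fin n) (Fin n) ℂ) i j := by
    intro i j
    simp [Matrix.one_apply]
    aesop
  -- compute the Wronskian at -1
  have hWa : ∀ i j, (∑ l, (star (w (-1) l i) * w' (-1) l j - star (w' (-1) l i) * w (-1) l j))
      = (-(2*K)) * (1 : Matrix (Fin n) (Fin n) ℂ) i j := by
    intro i j
    have hterm : ∀ l : Fin n, star (w (-1) l i) * w' (-1) l j - star (w' (-1) l i) * w (-1) l j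
        = ((1 : Matrix (Fin n) (Fin n) ℂ) l i * (1 : Matrix (Fin n) (Fin n) ℂ) l j) * (-(2*K)) := by
      intro l
      rw [hwneg1 l i, hwneg1 l j, hw'neg1 l i, hw'neg1 l j, hcK]
      simp only [star_mul', hKs, hone, star_neg]
      linear_combination (-(2:ℂ)*K*((1 : Matrix (Fin n) (Fin n) ℂ) l i)
        * ((1 : Matrix (Fin n) (Fin n) ℂ) l j)) * hcc
    rw [Finset.sum_congr rfl (fun l _ => hterm l), ← Finset.sum_mul, hsum1]
    ring
  -- compute the Wronskian at b
  have hWb : ∀ i j, (∑ l, (star (w b l i) * w' b l j - star (w' b l i) * w b l j))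
      = (2*K) * ((Pᴴ * P) i j - (Sᴴ * S) i j) := by
    intro i j
    have hterm : ∀ l : Fin n, star (w b l i) * w' b l j - star (w' b l i) * w b l j
        = (2*K) * (star (P l i) * P l j - star (S l i) * S l j) := by
      intro l
      rw [hwb l i, hwb l j, hw'b l i, hw'b l j, hqK]
      simp only [star_add, star_mul', hsp, hsq, hKs, star_neg]
      linear_combination ((2:ℂ)*K*(star (P l i) * P l j - star (S l i) * S l j)) * hpq
    rw [Finset.sum_congr rfl (fun l _ => hterm l), ← Finset.mul_sum, Finset.sum_sub_distrib,
      Matrix.mul_apply, Matrix.mul_apply]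
    simp only [Matrix.conjTranspose_apply]
  -- conclude
  have hK0 : (2*K) ≠ 0 := by
    have h1 : (k:ℂ) ≠ 0 := Complex.ofReal_ne_zero.mpr (ne_of_gt hk)
    rw [hK]
    exact mul_ne_zero two_ne_zero (mul_ne_zero Complex.I_ne_zero h1)
  ext i j
  have h := key i j (-1) b
  rw [hWa i j, hWb i j] at h
  have h2 : (2*K) * ((Sᴴ * S) i j - (Pᴴ * P) i j)
      = (2*K) * ((1 : Matrix (Fin n) (Fin n) ℂ) i j) := by linear_combination h
  have h3 := mul_left_cancel₀ hK0 h2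
  simpa [Matrix.sub_apply] using h3
end

section
/- Let n ≥ 1, let v : ℝ → Mₙ(ℝ) be continuous with v(x) symmetric for every x and v(x) = 0 for x > s (s > 0), let k > 0 and λ = k². Suppose u : [0,∞) → Mₙ(ℝ) is a twice differentiable real matrix solution of −u″(x) + v(x)u(x) = λ u(x) with u(0) = I and u′(0) = 0, and suppose A, B ∈ Mₙ(ℂ) satisfy u(x) = e^{ikx}·A + e^{−ikx}·B for all x > s. Then B = conj(A) (the entrywise complex conjugate of A) and AᵀB = BᵀA. -/
open Matrix

lemma conj_exp_aux (k x : ℝ) :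
    (starRingEnd ℂ) (Complex.exp (Complex.I * k * x)) = Complex.exp (-(Complex.I * k * x)) := by
  rw [← Complex.exp_conj]
  congr 1
  simp only [_root_.map_mul, map_neg, Complex.conj_I, Complex.conj_ofReal]
  ring

lemma conj_exp_aux' (k x : ℝ) :
    (starRingEnd ℂ) (Complex.exp (-(Complex.I * k * x))) = Complex.exp (Complex.I * k * x) := by
  rw [← Complex.exp_conj]
  congr 1
  simp only [_root_.map_mul, map_neg, Complex.conj_I, Complex.conj_ofReal]
  ring

/-- for the real matrix solution `u` of `-u'' + v u = k² u`, `u(0) = I`,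
`u'(0) = 0`, written as `u = e^{ikx} A + e^{-ikx} B` beyond the support of `v`, one has
`B = conj A` and `AᵀB = BᵀA`. -/
theorem coefficients_conjugate_and_pseudo_commute (n : ℕ) (hn : 1 ≤ n)
    (s : ℝ) (hs : 0 < s)
    (v : ℝ → Matrix (Fin n) (Fin n) ℝ)
    (hv_cont : ∀ i j, Continuous fun x => v x i j)
    (hv_symm : ∀ x, (v x)ᵀ = v x)
    (hv_supp : ∀ x : ℝ, s < x → v x = 0)
    (k : ℝ) (hk : 0 < k) (lam : ℝ) (hlam : lam = k ^ 2)
    (u u' u'' : ℝ → Matrix (Fin n) (Fin n) ℝ)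
    (hu' : ∀ x ∈ Set.Ici (0 : ℝ), ∀ i j,
      HasDerivWithinAt (fun t => u t i j) (u' x i j) (Set.Ici 0) x)
    (hu'' : ∀ x ∈ Set.Ici (0 : ℝ), ∀ i j,
      HasDerivWithinAt (fun t => u' t i j) (u'' x i j) (Set.Ici 0) x)
    (hu_eq : ∀ x : ℝ, 0 ≤ x → -u'' x + v x * u x = lam • u x)
    (hu0 : u 0 = 1) (hu'0 : u' 0 = 0)
    (A B : Matrix (Fin n) (Fin n) ℂ)
    (hu_rep : ∀ x : ℝ, s < x →
      (u x).map (Complex.ofReal)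
        = Complex.exp (Complex.I * k * x) • A + Complex.exp (-(Complex.I * k * x)) • B) :
    B = A.map (starRingEnd ℂ) ∧ Aᵀ * B = Bᵀ * A := by
  -- entrywise representation
  have hrep : ∀ x : ℝ, s < x → ∀ i j, ((u x i j : ℝ) : ℂ)
      = Complex.exp (Complex.I * k * x) * A i j
        + Complex.exp (-(Complex.I * k * x)) * B i j := by
    intro x hx i j
    have h := hu_rep x hx
    have h2 := congrFun (congrFun h i) j
    simpa [Matrix.map_apply, Matrix.add_apply, Matrix.smul_apply, smul_eq_mul] using h2
  -- conjugate relation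
  have hconj : ∀ x : ℝ, s < x → ∀ i j,
      Complex.exp (-(Complex.I * k * x)) * (starRingEnd ℂ) (A i j)
        + Complex.exp (Complex.I * k * x) * (starRingEnd ℂ) (B i j)
      = Complex.exp (Complex.I * k * x) * A i j
        + Complex.exp (-(Complex.I * k * x)) * B i j := by
    intro x hx i j
    have h := hrep x hx i j
    have h2 := congrArg (starRingEnd ℂ) h
    rw [Complex.conj_ofReal, h, map_add, _root_.map_mul, _root_.map_mul,
      conj_exp_aux, conj_exp_aux'] at h2
    exact h2.symm
  -- Part 1 : B = conj A
  have hkC : (k : ℂ) ≠ 0 := by exact_mod_cast hk.ne'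
  have hB : ∀ i j, B i j = (starRingEnd ℂ) (A i j) := by
    intro i j
    set E : ℂ := Complex.exp (Complex.I * k * (s + 1)) with hEdef
    set F : ℂ := Complex.exp (-(Complex.I * k * (s + 1))) with hFdef
    have hEF : E * F = 1 := by
      rw [hEdef, hFdef, ← Complex.exp_add]; simp
    have hx1 : s < s + 1 := by linarith
    have hx2 : s < s + 1 + Real.pi / (2 * k) := by
      have : 0 < Real.pi / (2 * k) := by positivity
      linarith
    have harg : (Complex.I * k * (s + 1 + Real.pi / (2 * k)) : ℂ)
        = Complex.I * k * (s + 1) + (Real.pi / 2 : ℝ) * Complex.I := by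
      push_cast
      field_simp
    have hexpI : Complex.exp (((Real.pi / 2 : ℝ) : ℂ) * Complex.I) = Complex.I := by
      rw [Complex.exp_mul_I]
      simp [← Complex.ofReal_cos, ← Complex.ofReal_sin, Real.cos_pi_div_two,
        Real.sin_pi_div_two]
    have hE2 : Complex.exp (Complex.I * k * (s + 1 + Real.pi / (2 * k))) = E * Complex.I := by
      rw [harg, Complex.exp_add, hexpI, hEdef]
    have hexpI' : Complex.exp (-(((Real.pi / 2 : ℝ) : ℂ) * Complex.I)) = -Complex.I := by
      rw [Complex.exp_neg, hexpI, Complex.inv_I]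
    have hF2 : Complex.exp (-(Complex.I * k * (s + 1 + Real.pi / (2 * k)))) = F * (-Complex.I) := by
      rw [harg, neg_add, Complex.exp_add, hFdef, hexpI']
    have e1 := hconj (s + 1) hx1 i j
    have e2 := hconj (s + 1 + Real.pi / (2 * k)) hx2 i j
    push_cast at e1 e2
    rw [hE2, hF2] at e2
    rw [← hEdef, ← hFdef] at e1
    have e1' : (starRingEnd ℂ) (A i j) + E ^ 2 * (starRingEnd ℂ) (B i j)
        = E ^ 2 * A i j + B i j := by
      linear_combination E * e1 + (B i j - (starRingEnd ℂ) (A i j)) * hEF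
    have e2' : (starRingEnd ℂ) (A i j) - E ^ 2 * (starRingEnd ℂ) (B i j)
        = -(E ^ 2) * A i j + B i j := by
      have hI2 : Complex.I ^ 2 = -1 := Complex.I_sq
      linear_combination (E * Complex.I) * e2 + (B i j - (starRingEnd ℂ) (A i j)) * hEF
        + (E * F * (starRingEnd ℂ) (A i j) - E ^ 2 * (starRingEnd ℂ) (B i j)
            + E ^ 2 * A i j - E * F * B i j) * hI2
    linear_combination (-(1:ℂ)/2) * e1' + (-(1:ℂ)/2) * e2'
  -- pick the point x₀
  set x₀ : ℝ := s + 1 with hx₀def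
  have hx₀s : s < x₀ := by rw [hx₀def]; linarith
  have hx₀0 : (0 : ℝ) < x₀ := by rw [hx₀def]; linarith
  have hEE' : Complex.exp (Complex.I * k * x₀) * Complex.exp (-(Complex.I * k * x₀)) = 1 := by
    rw [← Complex.exp_add]; simp
  -- derivative of u at x₀, complexified
  have hU' : ∀ i j, ((u' x₀ i j : ℝ) : ℂ)
      = Complex.I * k * Complex.exp (Complex.I * k * x₀) * A i j
        - Complex.I * k * Complex.exp (-(Complex.I * k * x₀)) * B i j := by
    intro i j
    set D : ℂ := Complex.I * k * Complex.exp (Complex.I * k * x₀) * A i j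
        - Complex.I * k * Complex.exp (-(Complex.I * k * x₀)) * B i j with hDdef
    set g : ℝ → ℂ := fun t => Complex.exp (Complex.I * k * t) * A i j
        + Complex.exp (-(Complex.I * k * t)) * B i j with hgdef
    have hlin : ∀ t : ℝ, HasDerivAt (fun t : ℝ => Complex.I * k * (t : ℂ)) (Complex.I * k) t := by
      intro t
      simpa using (Complex.ofRealCLM.hasDerivAt (x := t)).const_mul (Complex.I * k)
    have hgd : HasDerivAt g D x₀ := by
      have h1 := (((hlin x₀).cexp).mul_const (A i j))
      have h2 := ((((hlin x₀).fun_neg).cexp).mul_const (B i j))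
      have h3 := h1.fun_add h2
      rw [hDdef, hgdef]
      exact h3.congr_deriv (by ring)
    have hmem : Set.Ici (0 : ℝ) ∈ nhds x₀ := Ici_mem_nhds hx₀0
    have hud : HasDerivAt (fun t => u t i j) (u' x₀ i j) x₀ :=
      (hu' x₀ (Set.mem_Ici.mpr hx₀0.le) i j).hasDerivAt hmem
    have hev : (fun t => u t i j) =ᶠ[nhds x₀] fun t => (g t).re := by
      filter_upwards [Ioi_mem_nhds hx₀s] with t ht
      have h := hrep t ht i j
      rw [hgdef]
      simp only [← h, Complex.ofReal_re]
    have hre : HasDerivAt (fun t => (g t).re) (u' x₀ i j) x₀ :=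
      hud.congr_of_eventuallyEq hev.symm
    have hre2 : HasDerivAt (fun t => (g t).re) D.re x₀ := by
      exact Complex.reCLM.hasFDerivAt.comp_hasDerivAt x₀ hgd
    have hre_eq : u' x₀ i j = D.re := hre.unique hre2
    have him0 : (fun t => (g t).im) =ᶠ[nhds x₀] fun _ => (0 : ℝ) := by
      filter_upwards [Ioi_mem_nhds hx₀s] with t ht
      have h := hrep t ht i j
      rw [hgdef]
      simp only [← h, Complex.ofReal_im]
    have him2 : HasDerivAt (fun t => (g t).im) 0 x₀ :=
      (hasDerivAt_const x₀ (0 : ℝ)).congr_of_eventuallyEq him0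
    have him : HasDerivAt (fun t => (g t).im) D.im x₀ := by
      exact Complex.imCLM.hasFDerivAt.comp_hasDerivAt x₀ hgd
    have him_eq : D.im = 0 := him.unique him2
    apply Complex.ext
    · simp [hre_eq]
    · simp [him_eq]
  -- Wronskian is constant, hence zero
  have hWconst : ∀ i j, ∑ l, (u x₀ l i * u' x₀ l j - u' x₀ l i * u x₀ l j) = 0 := by
    intro i j
    set f : ℝ → ℝ := fun x => ∑ l, (u x l i * u' x l j - u' x l i * u x l j) with hfdef
    have hd : ∀ x ∈ Set.Ici (0 : ℝ), HasDerivWithinAt f 0 (Set.Ici 0) x := by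
      intro x hx
      have h'' : u'' x = v x * u x - lam • u x := by
        have h := hu_eq x hx
        rw [← h]; abel
      have hterm : ∀ l : Fin n, HasDerivWithinAt
          (fun t => u t l i * u' t l j - u' t l i * u t l j)
          ((u' x l i * u' x l j + u x l i * u'' x l j)
            - (u'' x l i * u x l j + u' x l i * u' x l j)) (Set.Ici 0) x := by
        intro l
        exact ((hu' x hx l i).mul (hu'' x hx l j)).sub ((hu'' x hx l i).mul (hu' x hx l j))
      have hsum : HasDerivWithinAt f (∑ l : Fin n, ((u' x l i * u' x l j + u x l i * u'' x l j)
            - (u'' x l i * u x l j + u' x l i * u' x l j))) (Set.Ici 0) x :=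
        HasDerivWithinAt.fun_sum (fun l _ => hterm l)
      have hval : ∑ l : Fin n, ((u' x l i * u' x l j + u x l i * u'' x l j)
            - (u'' x l i * u x l j + u' x l i * u' x l j)) = 0 := by
        have hmat : (u x)ᵀ * u'' x - (u'' x)ᵀ * u x = 0 := by
          rw [h'']
          have hvs := hv_symm x
          rw [Matrix.transpose_sub, Matrix.transpose_smul, Matrix.transpose_mul, hvs]
          rw [Matrix.mul_sub, Matrix.sub_mul, Matrix.mul_smul, Matrix.smul_mul]
          rw [← Matrix.mul_assoc]
          abel
        calc ∑ l : Fin n, ((u' x l i * u' x l j + u x l i * u'' x l j)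
              - (u'' x l i * u x l j + u' x l i * u' x l j))
            = ∑ l, (u x l i * u'' x l j - u'' x l i * u x l j) :=
              Finset.sum_congr rfl (fun l _ => by ring)
          _ = ((u x)ᵀ * u'' x - (u'' x)ᵀ * u x) i j := by
              simp [Matrix.sub_apply, Matrix.mul_apply, Matrix.transpose_apply,
                Finset.sum_sub_distrib]
          _ = 0 := by rw [hmat]; simp
      rwa [hval] at hsum
    have hcont : ContinuousOn f (Set.Icc 0 x₀) := fun x hx =>
      ((hd x (Set.mem_Ici.mpr hx.1)).continuousWithinAt).mono Set.Icc_subset_Ici_self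
    have hconst := constant_of_has_deriv_right_zero hcont (fun x hx =>
      (hd x (Set.mem_Ici.mpr hx.1)).mono (Set.Ici_subset_Ici.mpr hx.1))
    have h0 : f x₀ = f 0 := hconst x₀ (Set.mem_Icc.mpr ⟨hx₀0.le, le_refl _⟩)
    have hf0 : f 0 = 0 := by
      rw [hfdef]
      simp [hu'0]
    exact h0.trans hf0
  constructor
  · ext i j
    rw [Matrix.map_apply]
    exact hB i j
  · ext i j
    have hc : ((∑ l, (u x₀ l i * u' x₀ l j - u' x₀ l i * u x₀ l j) : ℝ) : ℂ) = 0 := by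
      rw [hWconst i j]; norm_num
    push_cast at hc
    have hc2 : ∑ l : Fin n, ((2 : ℂ) * Complex.I * k * (B l i * A l j - A l i * B l j)) = 0 := by
      rw [← hc]
      refine Finset.sum_congr rfl fun l _ => ?_
      rw [hrep x₀ hx₀s l i, hrep x₀ hx₀s l j, hU' l i, hU' l j]
      linear_combination (2 * Complex.I * (k : ℂ) * (A l i * B l j - B l i * A l j)) * hEE'
    rw [← Finset.mul_sum] at hc2
    have h2Ik : (2 : ℂ) * Complex.I * k ≠ 0 :=
      mul_ne_zero (mul_ne_zero two_ne_zero Complex.I_ne_zero) hkC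
    have hsum0 := (mul_eq_zero.mp hc2).resolve_left h2Ik
    rw [Finset.sum_sub_distrib, sub_eq_zero] at hsum0
    simp only [Matrix.mul_apply, Matrix.transpose_apply]
    exact hsum0.symm
end

section
/- Let n ≥ 1, let Q : ℝ → Mₙ(ℂ) be continuous, and let z : ℝ → Mₙ(ℂ) be differentiable with z′(x) = Q(x)·z(x) for all x. Then (Liouville's formula) for every x, det z(x) = det z(0) · exp( ∫₀ˣ tr Q(t) dt ); in particular the function x ↦ det z(x) satisfies the scalar ODE y′ = (tr Q(x))·y. -/
open Matrix

lemma hasDerivAt_det_aux {n : ℕ} (z z' : ℝ → Matrix (Fin n) (Fin n) ℂ) (x : ℝ)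
    (hz' : ∀ i j, HasDerivAt (fun t => z t i j) (z' x i j) x) :
    HasDerivAt (fun t => (z t).det)
      (∑ i, ((z x).updateCol i (fun k => z' x k i)).det) x := by
  have h : ∀ t, (z t).det = ∑ σ : Equiv.Perm (Fin n),
      (Equiv.Perm.sign σ : ℂ) * ∏ i, z t (σ i) i := fun t => by
    rw [Matrix.det_apply]
    simp [Units.smul_def, zsmul_eq_mul]
  have key : ∀ σ : Equiv.Perm (Fin n),
      HasDerivAt (fun t => (Equiv.Perm.sign σ : ℂ) * ∏ i, z t (σ i) i)
        ((Equiv.Perm.sign σ : ℂ) *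
          ∑ i, (∏ j ∈ Finset.univ.erase i, z x (σ j) j) * z' x (σ i) i) x := by
    intro σ
    have := (HasDerivAt.finset_prod (u := Finset.univ) (x := x)
      (f := fun i t => z t (σ i) i) (f' := fun i => z' x (σ i) i)
      (fun i _ => hz' (σ i) i)).const_mul ((Equiv.Perm.sign σ : ℂ))
    simpa [smul_eq_mul] using this
  have hsum := HasDerivAt.fun_sum (fun σ (_ : σ ∈ Finset.univ) => key σ)
  have hfun : (fun t => (z t).det) =
      fun t => ∑ σ ∈ Finset.univ, (Equiv.Perm.sign σ : ℂ) * ∏ i, z t (σ i) i := by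
    funext t; exact h t
  rw [hfun]
  refine hsum.congr_deriv ?_
  -- show ∑ i det(updateColumn ...) = ∑ σ ε σ * ∑ i ...
  have expand : ∀ i : Fin n, ((z x).updateCol i (fun k => z' x k i)).det
      = ∑ σ : Equiv.Perm (Fin n), (Equiv.Perm.sign σ : ℂ) *
          ((∏ j ∈ Finset.univ.erase i, z x (σ j) j) * z' x (σ i) i) := by
    intro i
    rw [Matrix.det_apply]
    refine Finset.sum_congr rfl fun σ _ => ?_
    rw [Units.smul_def, zsmul_eq_mul]
    congr 1
    rw [← Finset.mul_prod_erase (a := i) (h := Finset.mem_univ i), mul_comm]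
    congr 1
    · exact Finset.prod_congr rfl fun j hj => by
        rw [Matrix.updateCol_apply, if_neg (Finset.mem_erase.1 hj).1]
    · rw [Matrix.updateCol_apply, if_pos rfl]
  simp only [expand, Finset.mul_sum]
  exact Finset.sum_comm

lemma sum_det_updateColumn_mul {n : ℕ} (Q A : Matrix (Fin n) (Fin n) ℂ) :
    ∑ i, (A.updateCol i (fun k => (Q * A) k i)).det = Q.trace * A.det := by
  have h : ∀ i : Fin n, (A.updateCol i (fun k => (Q * A) k i)).det
      = (A.adjugate * (Q * A)) i i := by
    intro i
    rw [← Matrix.cramer_apply, Matrix.cramer_eq_adjugate_mulVec]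
    simp [Matrix.mulVec, Matrix.mul_apply, dotProduct]
  simp only [h]
  have : ∑ i, (A.adjugate * (Q * A)) i i = (A.adjugate * (Q * A)).trace := rfl
  rw [this, ← Matrix.mul_assoc, Matrix.trace_mul_cycle,
    Matrix.mul_adjugate, Matrix.smul_mul, Matrix.one_mul, Matrix.trace_smul]
  simp [smul_eq_mul, mul_comm]

/-- Liouville's formula: if `z' = Q z`, then
`det z(x) = det z(0) · exp(∫₀ˣ tr Q)`; in particular `y = det z` solves `y' = (tr Q) y`. -/
theorem liouville_formula (n : ℕ) (hn : 1 ≤ n)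
    (Q : ℝ → Matrix (Fin n) (Fin n) ℂ)
    (hQ_cont : ∀ i j, Continuous fun x => Q x i j)
    (z z' : ℝ → Matrix (Fin n) (Fin n) ℂ)
    (hz' : ∀ x i j, HasDerivAt (fun t => z t i j) (z' x i j) x)
    (hODE : ∀ x, z' x = Q x * z x) :
    (∀ x : ℝ, (z x).det = (z 0).det * Complex.exp (∫ t in (0 : ℝ)..x, (Q t).trace)) ∧
      ∀ x : ℝ, HasDerivAt (fun t => (z t).det) ((Q x).trace * (z x).det) x := by
  have hdet : ∀ x : ℝ, HasDerivAt (fun t => (z t).det) ((Q x).trace * (z x).det) x := by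
    intro x
    have := hasDerivAt_det_aux z z' x (fun i j => hz' x i j)
    rwa [show (∑ i, ((z x).updateCol i (fun k => z' x k i)).det)
        = (Q x).trace * (z x).det by
      rw [← sum_det_updateColumn_mul (Q x) (z x)]
      exact Finset.sum_congr rfl fun i _ => by rw [hODE x]] at this
  refine ⟨?_, hdet⟩
  have htr_cont : Continuous fun t => (Q t).trace := by
    unfold Matrix.trace
    exact continuous_finset_sum _ fun i _ => hQ_cont i i
  set I : ℝ → ℂ := fun x => ∫ t in (0 : ℝ)..x, (Q t).trace with hI
  have hI' : ∀ x : ℝ, HasDerivAt I ((Q x).trace) x := by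
    intro x
    exact intervalIntegral.integral_hasDerivAt_right
      (htr_cont.intervalIntegrable _ _)
      (htr_cont.stronglyMeasurableAtFilter _ _) htr_cont.continuousAt
  set g : ℝ → ℂ := fun x => (z x).det * Complex.exp (-I x) with hg
  have hg' : ∀ x : ℝ, HasDerivAt g 0 x := by
    intro x
    have h1 : HasDerivAt (fun t => Complex.exp (-I t))
        (Complex.exp (-I x) * (-(Q x).trace)) x := by
      have := ((hI' x).neg).cexp
      simpa [mul_comm] using this
    have := (hdet x).fun_mul h1
    refine this.congr_deriv ?_
    ring
  have hconst : ∀ x : ℝ, g x = g 0 := by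
    intro x
    have hdiff : Differentiable ℝ g := fun t => (hg' t).differentiableAt
    exact is_const_of_deriv_eq_zero hdiff (fun t => (hg' t).deriv) x 0
  intro x
  have h0 : I 0 = 0 := intervalIntegral.integral_same
  have := hconst x
  simp only [hg, h0, neg_zero, Complex.exp_zero, mul_one] at this
  calc (z x).det = (z x).det * (Complex.exp (-I x) * Complex.exp (I x)) := by
        rw [← Complex.exp_add, neg_add_cancel, Complex.exp_zero, mul_one]
    _ = ((z x).det * Complex.exp (-I x)) * Complex.exp (I x) := by ring
    _ = (z 0).det * Complex.exp (I x) := by rw [this]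
end
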